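/- Let M be a rooted tree (an indecomposable object). Then every nonzero subspace of H_quot(M) that is stable under the elimination operator E_A for every rooted forest A contains φ_∅. Consequently H_quot(M) is indecomposable: if H_quot(M) = U ⊕ W with U and W subspaces each stable under all the operators E_A, then U = 0 or W = 0. -/

import Mathlib

open scoped Classical

/-- Concrete (labeled) rooted trees: a root with a list of subtrees. -/
inductive RTree : Type
  | node : List RTree → RTree

/-- Shapes of admissible cuts: at each tree, either the full cut
(everything, including the root, goes to the pruned part `P`), or a choice of
an admissible cut of each child subtree.  A `full` occurring strictly inside
corresponds to cutting the edge above that vertex. -/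
inductive CutShape : Type
  | full
  | branch : List CutShape → CutShape

namespace CK

/-- Number of vertices of a forest. -/
def sizeL : List RTree → ℕ
  | [] => 0
  | .node l :: ts => 1 + sizeL l + sizeL ts

/-- All admissible cuts of a forest (a choice of admissible cut of each tree). -/
def cutsF : List RTree → List (List CutShape)
  | [] => [[]]
  | .node l :: ts =>
      (CutShape.full :: (cutsF l).map CutShape.branch).flatMap
        fun c => (cutsF ts).map (c :: ·)

/-- The root part `R_C(F)` of a cut. -/
def Rcut : List RTree → List CutShape → List RTree
  | [], _ => []
  | _ :: _, [] => []
  | .node _ :: ts, .full :: cs => Rcut ts cs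
  | .node l :: ts, .branch ds :: cs => RTree.node (Rcut l ds) :: Rcut ts cs

/-- The pruned part `P_C(F)` of a cut. -/
def Pcut : List RTree → List CutShape → List RTree
  | [], _ => []
  | _ :: _, [] => []
  | .node l :: ts, .full :: cs => RTree.node l :: Pcut ts cs
  | .node l :: ts, .branch ds :: cs => Pcut l ds ++ Pcut ts cs

/-- Number of `full`s occurring in a cut. -/
def fullsL : List CutShape → ℕ
  | [] => 0
  | .full :: cs => 1 + fullsL cs
  | .branch ds :: cs => fullsL ds + fullsL cs

/-- A list of concrete forests containing (representatives of) every forest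
with at most `n` vertices. -/
def forestsUpTo : ℕ → List (List RTree)
  | 0 => [[]]
  | n+1 => [] :: (forestsUpTo n).flatMap fun l => (forestsUpTo n).map fun F => RTree.node l :: F

/-- Isomorphism of rooted trees (non-planar): a root-preserving bijection, i.e.
the lists of subtrees agree up to permutation and isomorphism. -/
inductive Iso : RTree → RTree → Prop
  | node {l₁ l l₂ : List RTree} : List.Forall₂ Iso l₁ l → l.Perm l₂ → Iso (.node l₁) (.node l₂)

/-- Isomorphism classes of rooted trees. -/
abbrev TreeClass : Type := Quot Iso

/-- Isomorphism classes of rooted forests = multisets of tree classes.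
The empty forest is `0`. -/
abbrev ForestClass : Type := Multiset TreeClass

/-- Isomorphism class of a tree. -/
def clT (t : RTree) : TreeClass := Quot.mk _ t

/-- Isomorphism class of a forest. -/
def clF (F : List RTree) : ForestClass := (F.map clT : List TreeClass)

/-- A concrete representative of a forest class. -/
noncomputable def repF (M : ForestClass) : List RTree := M.toList.map Quot.out

/-- A concrete representative of a tree class. -/
noncomputable def repT (T : TreeClass) : RTree := T.out

/-- Number of vertices of a forest class. -/
noncomputable def sizeC (M : ForestClass) : ℕ := sizeL (repF M)

/-- Number of vertices of a tree class. -/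
noncomputable def sizeT (T : TreeClass) : ℕ := sizeL [repT T]

/-- The Hall algebra `H`: finitely supported ℚ-valued functions on
isomorphism classes of rooted forests, with basis the delta functions. -/
abbrev H : Type := ForestClass →₀ ℚ

/-- The basis element `δ_A` of `H`. -/
noncomputable def delta (A : ForestClass) : H := Finsupp.single A 1

/-- `n(A,B;M)`: the number of admissible cuts `C` of `M` with
`P_C(M) ≅ A` and `R_C(M) ≅ B`. -/
noncomputable def nCuts (A B M : ForestClass) : ℕ :=
  (cutsF (repF M)).countP fun c =>
    decide (clF (Pcut (repF M) c) = A ∧ clF (Rcut (repF M) c) = B)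

/-- A finite set of forest classes containing all classes with at most `n`
vertices. -/
noncomputable def forestCand (n : ℕ) : Finset ForestClass :=
  ((forestsUpTo n).map clF).toFinset

/-- A finite set of tree classes containing all classes with at most `n+1`
vertices. -/
noncomputable def treeCand (n : ℕ) : Finset TreeClass :=
  ((forestsUpTo n).map fun F => clT (RTree.node F)).toFinset

/-- The Hall product on basis elements: `δ_A × δ_B = Σ_M n(A,B;M)·δ_M`
(every `M` with `n(A,B;M) ≠ 0` has exactly `sizeC A + sizeC B` vertices). -/
noncomputable def mulBasis (A B : ForestClass) : H :=
  ∑ M ∈ forestCand (sizeC A + sizeC B), (nCuts A B M : ℚ) • delta M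

/-- The Hall product on `H`, extended bilinearly from basis elements. -/
noncomputable def hmul (f g : H) : H :=
  f.sum fun A a => g.sum fun B b => (a * b) • mulBasis A B

/-- The Connes-Kreimer Lie algebra `n_T` (as a vector space): the span of
isomorphism classes of rooted trees. -/
abbrev nT : Type := TreeClass →₀ ℚ

/-- The basis element of `n_T` corresponding to a rooted tree `T`. -/
noncomputable def tau (T : TreeClass) : nT := Finsupp.single T 1

/-- `a(T₁,T₂;T)`: the number of edges `e` of `T` such that the single-edge cut
at `e` has pruned part `≅ T₁` and root part `≅ T₂`. -/
noncomputable def aCount (T₁ T₂ T : TreeClass) : ℕ :=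
  (cutsF [repT T]).countP fun c =>
    decide (fullsL c = 1 ∧ clF (Pcut [repT T] c) = ({T₁} : Multiset TreeClass)
      ∧ clF (Rcut [repT T] c) = ({T₂} : Multiset TreeClass))

/-- The grafting (pre-Lie) product on basis elements:
`T₁ * T₂ = Σ_T a(T₁,T₂;T)·T`. -/
noncomputable def graftBasis (T₁ T₂ : TreeClass) : nT :=
  ∑ T ∈ treeCand (sizeT T₁ + sizeT T₂), (aCount T₁ T₂ T : ℚ) • tau T

/-- The grafting (pre-Lie) product on `n_T`, extended bilinearly. -/
noncomputable def graft (x y : nT) : nT :=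
  x.sum fun T₁ a => y.sum fun T₂ b => (a * b) • graftBasis T₁ T₂

/-- The Connes-Kreimer bracket `[x,y] = x*y - y*x` on `n_T`. -/
noncomputable def ckBracket (x y : nT) : nT := graft x y - graft y x

/-- `Ẽ_A δ_B = Σ_C δ_{R_C(B)}`, the sum over admissible cuts `C` of `B` with
`P_C(B) ≅ A`. -/
noncomputable def elimBasis (A B : ForestClass) : H :=
  (((cutsF (repF B)).filter fun c => decide (clF (Pcut (repF B) c) = A)).map
    fun c => delta (clF (Rcut (repF B) c))).sum

/-- The elimination operator `E_A` (here on `H ≅ H*`, identifying `φ_B` with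
`δ_B`). -/
noncomputable def elim (A : ForestClass) : H →ₗ[ℚ] H :=
  Finsupp.lsum ℚ fun B => LinearMap.toSpanSingleton ℚ H (elimBasis A B)

/-- `Ẽ^top_A δ_B = Σ_C δ_{P_C(B)}`, the sum over admissible cuts `C` of `B`
with `R_C(B) ≅ A`. -/
noncomputable def topElimBasis (A B : ForestClass) : H :=
  (((cutsF (repF B)).filter fun c => decide (clF (Rcut (repF B) c) = A)).map
    fun c => delta (clF (Pcut (repF B) c))).sum

/-- The top-elimination operator `E^top_A`. -/
noncomputable def topElim (A : ForestClass) : H →ₗ[ℚ] H :=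
  Finsupp.lsum ℚ fun B => LinearMap.toSpanSingleton ℚ H (topElimBasis A B)

/-- `H ⊗ H`, realized as finitely supported functions on pairs of classes. -/
abbrev H2 : Type := (ForestClass × ForestClass) →₀ ℚ

/-- `Δ(δ_M) = Σ δ_A ⊗ δ_B`, the sum over ordered pairs `(A,B)` of classes with
`A ⊔ B ≅ M`. -/
noncomputable def deltaBasis (M : ForestClass) : H2 :=
  ∑ A ∈ M.powerset.toFinset, Finsupp.single (A, M - A) 1

/-- The coproduct `Δ : H → H ⊗ H`. -/
noncomputable def coprod : H →ₗ[ℚ] H2 :=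
  Finsupp.lsum ℚ fun M => LinearMap.toSpanSingleton ℚ H2 (deltaBasis M)

/-- `H_quot(M)`: the subspace of `H* ≅ H` spanned by
`{φ_{R_C(M)} : C an admissible cut of M}` (the quotients of `M`). -/
noncomputable def Hquot (M : ForestClass) : Submodule ℚ H :=
  Submodule.span ℚ
    {v : H | ∃ c ∈ cutsF (repF M), v = delta (clF (Rcut (repF M) c))}


/-! ### Auxiliary lemmas -/

/-- Number of vertices of a single tree. -/
def szT (t : RTree) : ℕ := sizeL [t]

lemma szT_node (l : List RTree) : szT (.node l) = 1 + sizeL l := by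
  simp [szT, sizeL]

lemma sizeL_nil : sizeL [] = 0 := by simp [sizeL]

lemma sizeL_cons (t : RTree) (ts : List RTree) : sizeL (t :: ts) = szT t + sizeL ts := by
  cases t with
  | node l => simp [szT, sizeL]

lemma sizeL_append : ∀ (a b : List RTree), sizeL (a ++ b) = sizeL a + sizeL b
  | [], b => by simp [sizeL]
  | .node l :: ts, b => by
      simp only [List.cons_append, sizeL, sizeL_append ts b]; omega

lemma sizeL_eq_zero : ∀ {F : List RTree}, sizeL F = 0 → F = [] := by
  intro F h
  cases F with
  | nil => rfl
  | cons t ts => cases t with | node l => simp [sizeL] at h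

lemma mem_cutsF_cons {l ts : List RTree} {c : List CutShape} :
    c ∈ cutsF (.node l :: ts) ↔
      (∃ cs ∈ cutsF ts, c = .full :: cs) ∨
      (∃ ds ∈ cutsF l, ∃ cs ∈ cutsF ts, c = .branch ds :: cs) := by
  simp only [cutsF, List.mem_flatMap, List.mem_cons, List.mem_map]
  constructor
  · rintro ⟨a, ha | ⟨ds, hds, rfl⟩, cs, hcs, rfl⟩
    · subst ha; exact Or.inl ⟨cs, hcs, rfl⟩
    · exact Or.inr ⟨ds, hds, cs, hcs, rfl⟩
  · rintro (⟨cs, hcs, rfl⟩ | ⟨ds, hds, cs, hcs, rfl⟩)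
    · exact ⟨.full, Or.inl rfl, cs, hcs, rfl⟩
    · exact ⟨.branch ds, Or.inr ⟨ds, hds, rfl⟩, cs, hcs, rfl⟩

lemma cut_size : ∀ (n : ℕ) (F : List RTree) (c : List CutShape), sizeL F ≤ n → c ∈ cutsF F →
    sizeL (Pcut F c) + sizeL (Rcut F c) = sizeL F := by
  intro n
  induction n with
  | zero =>
      intro F c h _
      have hF : F = [] := sizeL_eq_zero (Nat.le_zero.mp h)
      subst hF; simp [Pcut, Rcut, sizeL]
  | succ m ih =>
      intro F c h hc
      match F with
      | [] => simp [Pcut, Rcut, sizeL]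
      | .node l :: ts =>
        have hsz : 1 + sizeL l + sizeL ts ≤ m + 1 := by simpa [sizeL] using h
        rcases mem_cutsF_cons.mp hc with ⟨cs, hcs, rfl⟩ | ⟨ds, hds, cs, hcs, rfl⟩
        · have e1 := ih ts cs (by omega) hcs
          simp only [Pcut, Rcut, sizeL]
          omega
        · have e1 := ih ts cs (by omega) hcs
          have e2 := ih l ds (by omega) hds
          simp only [Pcut, Rcut, sizeL]
          rw [sizeL_append]
          omega

lemma Rcut_nil : ∀ (F : List RTree) (c : List CutShape), c ∈ cutsF F → Rcut F c = [] →
    Pcut F c = F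
  | [], c, _, _ => by simp [Pcut]
  | .node l :: ts, c, hc, hr => by
      rcases mem_cutsF_cons.mp hc with ⟨cs, hcs, rfl⟩ | ⟨ds, hds, cs, hcs, rfl⟩
      · simp only [Rcut] at hr
        simp only [Pcut, Rcut_nil ts cs hcs hr]
      · simp [Rcut] at hr

/-- The full cut of a forest. -/
def fullCut (F : List RTree) : List CutShape := F.map fun _ => .full

lemma fullCut_mem : ∀ F : List RTree, fullCut F ∈ cutsF F
  | [] => by simp [fullCut, cutsF]
  | .node l :: ts => by
      simp only [fullCut, List.map_cons, cutsF, List.mem_flatMap]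
      exact ⟨.full, List.mem_cons_self,
        List.mem_map.mpr ⟨fullCut ts, fullCut_mem ts, rfl⟩⟩

lemma Pcut_fullCut : ∀ F : List RTree, Pcut F (fullCut F) = F
  | [] => by simp [Pcut]
  | .node l :: ts => by
      have h := Pcut_fullCut ts
      show Pcut (RTree.node l :: ts) (CutShape.full :: fullCut ts) = RTree.node l :: ts
      simp only [Pcut]
      rw [h]

lemma sizeL_eq_sum : ∀ F : List RTree, sizeL F = (F.map szT).sum
  | [] => by simp [sizeL]
  | t :: ts => by rw [sizeL_cons, List.map_cons, List.sum_cons, sizeL_eq_sum ts]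

lemma perm_sizeL {l₁ l₂ : List RTree} (h : l₁.Perm l₂) : sizeL l₁ = sizeL l₂ := by
  rw [sizeL_eq_sum, sizeL_eq_sum]
  exact (h.map szT).sum_eq

lemma forall2_size (m : ℕ) (ih : ∀ t u : RTree, szT t ≤ m → Iso t u → szT t = szT u) :
    ∀ {l₁ l : List RTree}, List.Forall₂ Iso l₁ l → sizeL l₁ ≤ m → sizeL l₁ = sizeL l := by
  intro l₁ l hf
  induction hf with
  | nil => intro _; rfl
  | @cons a b l₁' l' hab _ ihf =>
      intro hb
      rw [sizeL_cons] at hb ⊢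
      rw [sizeL_cons, ih a b (by omega) hab, ihf (by omega)]

lemma iso_size : ∀ (n : ℕ) (t u : RTree), szT t ≤ n → Iso t u → szT t = szT u := by
  intro n
  induction n with
  | zero => intro t u h _; cases t with | node l => rw [szT_node] at h; omega
  | succ m ih =>
      intro t u h hiso
      cases hiso with
      | @node l₁ l l₂ hf hp =>
        rw [szT_node] at h
        have h₁ : sizeL l₁ = sizeL l := forall2_size m ih hf (by omega)
        have h₂ : sizeL l = sizeL l₂ := perm_sizeL hp
        rw [szT_node, szT_node]; omega

lemma iso_size' {t u : RTree} (h : Iso t u) : szT t = szT u :=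
  iso_size (szT t) t u le_rfl h

/-- Size, descended to isomorphism classes of trees. -/
noncomputable def szQ : TreeClass → ℕ := Quot.lift szT fun _ _ h => iso_size' h

lemma szQ_out (T : TreeClass) : szQ T = szT T.out := by
  conv_lhs => rw [← Quot.out_eq T]
  rfl

lemma sizeC_eq (M : ForestClass) : sizeC M = (M.map szQ).sum := by
  rw [sizeC, repF, sizeL_eq_sum, List.map_map]
  conv_rhs => rw [← Multiset.coe_toList M]
  rw [Multiset.map_coe, Multiset.sum_coe]
  congr 1
  exact List.map_congr_left fun T _ => (szQ_out T).symm

lemma sizeC_clF (F : List RTree) : sizeC (clF F) = sizeL F := by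
  rw [sizeC_eq, clF, Multiset.map_coe, Multiset.sum_coe, List.map_map, sizeL_eq_sum]
  rfl

lemma clF_repF (B : ForestClass) : clF (repF B) = B := by
  rw [clF, repF, List.map_map]
  have h : (clT ∘ Quot.out) = (id : TreeClass → TreeClass) := by
    funext T; exact Quot.out_eq T
  rw [h, List.map_id, Multiset.coe_toList]

lemma clF_nil : clF ([] : List RTree) = 0 := by simp [clF]

lemma elimBasis_zero (A B : ForestClass) (hle : sizeC B ≤ sizeC A) (hne : A ≠ B) :
    elimBasis A B = 0 := by
  have hfil : (cutsF (repF B)).filter (fun c => decide (clF (Pcut (repF B) c) = A)) = [] := by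
    rw [List.filter_eq_nil_iff]
    intro c hc hdec
    have hA : clF (Pcut (repF B) c) = A := of_decide_eq_true hdec
    have hs := cut_size (sizeL (repF B)) (repF B) c le_rfl hc
    have h1 : sizeL (Pcut (repF B) c) = sizeC A := by rw [← sizeC_clF, hA]
    have hBB : sizeC B = sizeL (repF B) := rfl
    have h2 : sizeL (Rcut (repF B) c) = 0 := by omega
    have h3 := Rcut_nil _ _ hc (sizeL_eq_zero h2)
    exact hne (by rw [← hA, h3, clF_repF])
  rw [elimBasis, hfil]
  rfl

lemma elimBasis_self (B : ForestClass) :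
    ∃ k : ℕ, 0 < k ∧ elimBasis B B = (k : ℚ) • delta 0 := by
  set L := (cutsF (repF B)).filter fun c => decide (clF (Pcut (repF B) c) = B) with hL
  refine ⟨L.length, ?_, ?_⟩
  · have hmem : fullCut (repF B) ∈ L := by
      rw [hL, List.mem_filter]
      exact ⟨fullCut_mem _, decide_eq_true (by rw [Pcut_fullCut, clF_repF])⟩
    exact List.length_pos_iff.mpr (List.ne_nil_of_mem hmem)
  · rw [elimBasis, ← hL]
    have hmap : L.map (fun c => delta (clF (Rcut (repF B) c))) = L.map (fun _ => delta 0) := by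
      apply List.map_congr_left
      intro c hc
      rw [hL, List.mem_filter] at hc
      obtain ⟨hc, hdec⟩ := hc
      have hA : clF (Pcut (repF B) c) = B := of_decide_eq_true hdec
      have hs := cut_size (sizeL (repF B)) (repF B) c le_rfl hc
      have h1 : sizeL (Pcut (repF B) c) = sizeC B := by rw [← sizeC_clF, hA]
      have hBB : sizeC B = sizeL (repF B) := rfl
      have h2 : sizeL (Rcut (repF B) c) = 0 := by omega
      rw [sizeL_eq_zero h2, clF_nil]
    rw [hmap, List.map_const', List.sum_replicate, Nat.cast_smul_eq_nsmul]

lemma elim_apply (A : ForestClass) (w : H) :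
    elim A w = w.sum fun B b => b • elimBasis A B := by
  simp [elim, Finsupp.lsum_apply, LinearMap.toSpanSingleton_apply, Finsupp.sum]

lemma key_lemma (U : Submodule ℚ H) (hstab : ∀ A : ForestClass, ∀ w ∈ U, elim A w ∈ U)
    (hne : U ≠ ⊥) : delta 0 ∈ U := by
  obtain ⟨w, hwU, hw0⟩ := Submodule.exists_mem_ne_zero_of_ne_bot hne
  have hsupp : w.support.Nonempty := Finsupp.support_nonempty_iff.mpr hw0
  obtain ⟨B, hB, hmax⟩ := w.support.exists_max_image sizeC hsupp
  obtain ⟨k, hk, hEB⟩ := elimBasis_self B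
  have hsum : elim B w = (w B * k) • delta 0 := by
    rw [elim_apply]
    rw [Finsupp.sum_eq_single B (fun B' hB' hne' => by
          rw [elimBasis_zero B B'
            (hmax B' (Finsupp.mem_support_iff.mpr hB')) (fun h => hne' h.symm), smul_zero])
      (by simp)]
    rw [hEB, smul_smul]
  have hwB : w B ≠ 0 := Finsupp.mem_support_iff.mp hB
  have hcoef : (w B * (k : ℚ)) ≠ 0 := mul_ne_zero hwB (Nat.cast_ne_zero.mpr hk.ne')
  have hd : delta 0 = (w B * (k : ℚ))⁻¹ • elim B w := by
    rw [hsum, smul_smul, inv_mul_cancel₀ hcoef, one_smul]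
  rw [hd]
  exact Submodule.smul_mem _ _ (hstab B w hwU)

/-- STATEMENT 15: for `M` a rooted tree (an indecomposable object), every
nonzero subspace of `H_quot(M)` stable under all elimination operators `E_A`
contains `φ_∅`; consequently `H_quot(M)` is indecomposable: it is not the
direct sum of two nonzero stable subspaces. -/
theorem Hquot_indecomposable (M : TreeClass) :
    (∀ U : Submodule ℚ H, U ≤ Hquot ({M} : Multiset TreeClass) →
      (∀ A : ForestClass, ∀ w ∈ U, elim A w ∈ U) → U ≠ ⊥ → delta 0 ∈ U) ∧
    (∀ U W : Submodule ℚ H,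
      U ≤ Hquot ({M} : Multiset TreeClass) → W ≤ Hquot ({M} : Multiset TreeClass) →
      (∀ A : ForestClass, ∀ w ∈ U, elim A w ∈ U) →
      (∀ A : ForestClass, ∀ w ∈ W, elim A w ∈ W) →
      U ⊓ W = ⊥ → U ⊔ W = Hquot ({M} : Multiset TreeClass) →
      U = ⊥ ∨ W = ⊥) := by
  constructor
  · intro U _ hstab hne
    exact key_lemma U hstab hne
  · intro U W _ _ hU hW hinf _
    by_contra hcon
    push_neg at hcon
    obtain ⟨hU0, hW0⟩ := hcon
    have h1 := key_lemma U hU hU0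
    have h2 := key_lemma W hW hW0
    have hmem : delta 0 ∈ U ⊓ W := ⟨h1, h2⟩
    rw [hinf, Submodule.mem_bot] at hmem
    exact one_ne_zero (Finsupp.single_eq_zero.mp hmem)


end CK
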